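/- Let G be a group, H ≤ G a finite-index subgroup, and Y ⊆ G a union of left cosets of H. Then Y is k-stable for some k ≤ [G:H] + 1. -/
import Mathlib


open Pointwise

/-- `A` is `k`-stable in `G` if there are no `a b : Fin k → G` with `a i * b j ∈ A ↔ i ≤ j`. -/
def IsKStable {G : Type*} [Group G] (k : ℕ) (A : Set G) : Prop :=
  ¬ ∃ a b : Fin k → G, ∀ i j : Fin k, a i * b j ∈ A ↔ i ≤ j

theorem coset_union_kStable {G : Type*} [Group G] (H : Subgroup G) (hH : H.index ≠ 0)
    (Y : Set G) (hY : ∀ y ∈ Y, y • (H : Set G) ⊆ Y) :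
    ∃ k ≤ H.index + 1, IsKStable k Y := by
  refine ⟨H.index + 1, le_refl _, ?_⟩
  rintro ⟨a, b, hab⟩
  -- membership in Y only depends on the left coset
  have key : ∀ x x' : G, (x : G ⧸ H) = (x' : G ⧸ H) → x ∈ Y → x' ∈ Y := by
    intro x x' h hx
    rw [QuotientGroup.eq] at h
    have hx' : x' = x * (x⁻¹ * x') := by group
    rw [hx']
    exact hY x hx ⟨x⁻¹ * x', h, rfl⟩
  have hfin : Finite (G ⧸ H) :=
    Nat.finite_of_card_ne_zero (by rwa [← Subgroup.index_eq_card])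
  have : Fintype (G ⧸ H) := Fintype.ofFinite _
  obtain ⟨i, j, hne, heq⟩ := Fintype.exists_ne_map_eq_of_card_lt
    (fun i : Fin (H.index + 1) => ((b i : G) : G ⧸ H)) (by
      rw [Fintype.card_fin, ← Nat.card_eq_fintype_card, ← Subgroup.index_eq_card]
      omega)
  rcases hne.lt_or_gt with h | h
  · -- i < j : use row a j
    have h1 : a j * b j ∈ Y := (hab j j).2 le_rfl
    have h2 : a j * b i ∈ Y := key _ _ (by
      simpa [QuotientGroup.mk_mul] using congrArg (fun q => (a j : G) • q) heq.symm) h1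
    exact absurd ((hab j i).1 h2) (not_le.2 h)
  · -- j < i : symmetric
    have h1 : a i * b i ∈ Y := (hab i i).2 le_rfl
    have h2 : a i * b j ∈ Y := key _ _ (by
      simpa [QuotientGroup.mk_mul] using congrArg (fun q => (a i : G) • q) heq) h1
    exact absurd ((hab i j).1 h2) (not_le.2 h)
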